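/- arXiv:2508.21185 — 4 statements merged into one kernel-verified Lean document; each statement's English description precedes it below -/
import Mathlib

section
/- The edge-distinguishing chromatic number of the complete graph K_n for n ≥ 3 equals n; that is, K_n admits an edge-distinguishing n-coloring but no edge-distinguishing (n-1)-coloring. -/
/-- A `k`-coloring `c` of the vertices of `G` is *edge-distinguishing* if the induced
edge coloring, sending each edge `{u,v}` to the unordered pair `{c u, c v}`, is
injective on the edge set. -/
def edgeDist {V : Type*} (G : SimpleGraph V) {k : ℕ} (c : V → Fin k) : Prop :=
  Set.InjOn (Sym2.map c) G.edgeSet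

theorem stmt_1 (n : ℕ) (hn : 3 ≤ n) :
    (∃ c : Fin n → Fin n, edgeDist (⊤ : SimpleGraph (Fin n)) c) ∧
    ¬ (∃ c : Fin n → Fin (n - 1), edgeDist (⊤ : SimpleGraph (Fin n)) c) := by
  constructor
  · refine ⟨id, fun e _ e' _ h => ?_⟩
    simpa [Sym2.map_id] using h
  · rintro ⟨c, hc⟩
    -- c is not injective
    have hcard : Fintype.card (Fin (n - 1)) < Fintype.card (Fin n) := by
      simp only [Fintype.card_fin]; omega
    obtain ⟨u, v, huv, hcuv⟩ := Fintype.exists_ne_map_eq_of_card_lt c hcard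
    -- find w distinct from u and v
    have hw : (({u, v} : Finset (Fin n))ᶜ).Nonempty := by
      rw [← Finset.card_pos, Finset.card_compl]
      have h2 : ({u, v} : Finset (Fin n)).card ≤ 2 := Finset.card_insert_le _ _ |>.trans (by simp)
      simp only [Fintype.card_fin]
      omega
    obtain ⟨w, hwmem⟩ := hw
    simp only [Finset.mem_compl, Finset.mem_insert, Finset.mem_singleton, not_or] at hwmem
    obtain ⟨hwu, hwv⟩ := hwmem
    have he1 : s(u, w) ∈ (⊤ : SimpleGraph (Fin n)).edgeSet := by
      simp [Ne.symm hwu]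
    have he2 : s(v, w) ∈ (⊤ : SimpleGraph (Fin n)).edgeSet := by
      simp [Ne.symm hwv]
    have hmap : Sym2.map c s(u, w) = Sym2.map c s(v, w) := by
      simp [hcuv]
    have := hc he1 he2 hmap
    rw [Sym2.eq_iff] at this
    tauto
end

section
/- In any edge-distinguishing coloring of the complete bipartite graph K_{n,m} (with n, m ≥ 1 and n + m ≥ 3), at most two vertices receive the same color, and if two vertices share a color they lie in different parts of the bipartition. -/
/-- The complete bipartite graph `K_{n,m}` with parts `Fin n` (left) and `Fin m` (right). -/
def bipG (n m : ℕ) : SimpleGraph (Fin n ⊕ Fin m) :=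
  SimpleGraph.fromRel (fun u v => ∃ a b, u = Sum.inl a ∧ v = Sum.inr b)

lemma bipG_mem (n m : ℕ) (a : Fin n) (b : Fin m) :
    s(Sum.inl a, Sum.inr b) ∈ (bipG n m).edgeSet := by
  simp only [SimpleGraph.mem_edgeSet, bipG, SimpleGraph.fromRel_adj]
  exact ⟨by simp, Or.inl ⟨a, b, rfl, rfl⟩⟩

theorem stmt_3 (n m : ℕ) (hn : 1 ≤ n) (hm : 1 ≤ m) (hnm : 3 ≤ n + m) {k : ℕ}
    (c : Fin n ⊕ Fin m → Fin k) (hc : edgeDist (bipG n m) c) :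
    (∀ u v w : Fin n ⊕ Fin m, u ≠ v → v ≠ w → u ≠ w →
      ¬ (c u = c v ∧ c v = c w)) ∧
    (∀ u v : Fin n, u ≠ v → c (Sum.inl u) ≠ c (Sum.inl v)) ∧
    (∀ u v : Fin m, u ≠ v → c (Sum.inr u) ≠ c (Sum.inr v)) := by
  have hL : ∀ a a' : Fin n, c (Sum.inl a) = c (Sum.inl a') → a = a' := by
    intro a a' h
    have b : Fin m := ⟨0, hm⟩
    have h1 := bipG_mem n m a b
    have h2 := bipG_mem n m a' b
    have := hc h1 h2 (by simp [Sym2.map_pair_eq, h])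
    rcases Sym2.eq_iff.mp this with ⟨h3, _⟩ | ⟨h3, _⟩
    · exact Sum.inl_injective h3
    · exact absurd h3 (by simp)
  have hR : ∀ b b' : Fin m, c (Sum.inr b) = c (Sum.inr b') → b = b' := by
    intro b b' h
    have a : Fin n := ⟨0, hn⟩
    have h1 := bipG_mem n m a b
    have h2 := bipG_mem n m a b'
    have := hc h1 h2 (by simp [Sym2.map_pair_eq, h])
    rcases Sym2.eq_iff.mp this with ⟨_, h3⟩ | ⟨h3, _⟩
    · exact Sum.inr_injective h3
    · exact absurd h3 (by simp)
  refine ⟨?_, fun u v huv h => huv (hL u v h), fun u v huv h => huv (hR u v h)⟩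
  rintro (u|u) (v|v) (w|w) huv hvw huw ⟨h1, h2⟩
  · exact huv (congrArg Sum.inl (hL u v h1))
  · exact huv (congrArg Sum.inl (hL u v h1))
  · exact huw (congrArg Sum.inl (hL u w (h1.trans h2)))
  · exact hvw (congrArg Sum.inr (hR v w h2))
  · exact hvw (congrArg Sum.inl (hL v w h2))
  · exact huw (congrArg Sum.inr (hR u w (h1.trans h2)))
  · exact huv (congrArg Sum.inr (hR u v h1))
  · exact huv (congrArg Sum.inr (hR u v h1))
end

section
/- The cycle C_7 admits no edge-distinguishing 3-coloring but admits an edge-distinguishing 4-coloring; hence λ(C_7) = 4. -/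
/-- The cycle graph on `m` vertices, with vertex set `ZMod m` and edges `{i, i+1}`. -/
def cycleG (m : ℕ) : SimpleGraph (ZMod m) :=
  SimpleGraph.fromRel (fun u v => v = u + 1)

instance : DecidableRel (cycleG 7).Adj := fun u v => by
  unfold cycleG SimpleGraph.fromRel; exact instDecidableAnd

instance {k : ℕ} (c : ZMod 7 → Fin k) : Decidable (edgeDist (cycleG 7) c) :=
  decidable_of_iff
    (∀ a ∈ (cycleG 7).edgeFinset, ∀ b ∈ (cycleG 7).edgeFinset, Sym2.map c a = Sym2.map c b → a = b)
    (by simp [edgeDist, Set.InjOn, SimpleGraph.mem_edgeFinset])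

lemma no3 : ¬ (∃ c : ZMod 7 → Fin 3, edgeDist (cycleG 7) c) := by
  rintro ⟨c, h⟩
  have hcard : (cycleG 7).edgeFinset.card ≤ (Finset.univ : Finset (Sym2 (Fin 3))).card :=
    Finset.card_le_card_of_injOn (Sym2.map c) (fun _ _ => Finset.mem_univ _)
      (fun a ha b hb => h (SimpleGraph.mem_edgeFinset.mp ha) (SimpleGraph.mem_edgeFinset.mp hb))
  have h7 : (cycleG 7).edgeFinset.card = 7 := by decide
  have h6 : (Finset.univ : Finset (Sym2 (Fin 3))).card = 6 := by decide
  omega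
theorem stmt_9 :
    ¬ (∃ c : ZMod 7 → Fin 3, edgeDist (cycleG 7) c) ∧
    (∃ c : ZMod 7 → Fin 4, edgeDist (cycleG 7) c) ∧
    IsLeast {k : ℕ | ∃ c : ZMod 7 → Fin k, edgeDist (cycleG 7) c} 4 := by
  have ex4 : ∃ c : ZMod 7 → Fin 4, edgeDist (cycleG 7) c := by
    exact ⟨fun x : ZMod 7 => ![0,0,1,1,2,2,3] x, by decide⟩
  refine ⟨no3, ex4, ex4, ?_⟩
  intro k hk
  by_contra hlt
  push_neg at hlt
  obtain ⟨c, hc⟩ := hk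
  refine no3 ⟨Fin.castLE (by omega) ∘ c, ?_⟩
  intro a ha b hb heq
  apply hc ha hb
  apply Sym2.map.injective (Fin.castLE_injective _)
  simpa [Sym2.map_map] using heq
end

section
/- In the EDGe game on the complete graph K_n with n ≥ 3 played with n colors, Player 2 has a winning strategy: after Player 1 colors any vertex with color a, Player 2 can color a second vertex with the same color a, after which no uncolored vertex can be legally colored, so the game ends with Player 2 having made the last move. -/
/-- A partial coloring (`none` = uncolored) is edge-distinguishing if the induced edge
coloring is injective on the edges whose two endpoints are both colored. -/
def pEdgeDist {V : Type*} (G : SimpleGraph V) {k : ℕ} (c : V → Option (Fin k)) : Prop :=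
  Set.InjOn (Sym2.map c) {e ∈ G.edgeSet | ∀ v ∈ e, (c v).isSome = true}

theorem stmt_10 (n : ℕ) (hn : 3 ≤ n) (u v w : Fin n) (huv : u ≠ v) (hwu : w ≠ u)
    (hwv : w ≠ v) (a b : Fin n) :
    ¬ pEdgeDist (⊤ : SimpleGraph (Fin n))
      (fun x => if x = u then some a else if x = v then some a else
        if x = w then some b else none) := by
  intro h
  set c : Fin n → Option (Fin n) := fun x => if x = u then some a else if x = v then some a else
        if x = w then some b else none with hc
  have cu : c u = some a := by simp [hc]
  have cv : c v = some a := by simp [hc, huv]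
  have cw : c w = some b := by simp [hc, hwu, hwv]
  have h1 : s(w, u) ∈ {e ∈ (⊤ : SimpleGraph (Fin n)).edgeSet | ∀ x ∈ e, (c x).isSome = true} := by
    constructor
    · simpa using hwu
    · intro x hx
      rcases Sym2.mem_iff.mp hx with rfl | rfl <;> simp [cw, cu]
  have h2 : s(w, v) ∈ {e ∈ (⊤ : SimpleGraph (Fin n)).edgeSet | ∀ x ∈ e, (c x).isSome = true} := by
    constructor
    · simpa using hwv
    · intro x hx
      rcases Sym2.mem_iff.mp hx with rfl | rfl <;> simp [cw, cv]
  have := h h1 h2 (by simp [Sym2.map_pair_eq, cu, cv, cw])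
  rw [Sym2.eq_iff] at this
  rcases this with ⟨_, h'⟩ | ⟨h', _⟩
  · exact huv h'
  · exact hwv h'
end
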